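/- Let t > 0 and let w : [0,t] × ℝ³ → ℝ³ be continuous, C¹ in the space variable, with V := ∫₀ᵗ ‖D_x w(τ,·)‖_{L^∞} dτ < ∞. Let ψ : [0,t] × ℝ³ → ℝ³ satisfy ψ_τ(x) = x + ∫₀^τ w(s, ψ_s(x)) ds for all τ ∈ [0,t] and x ∈ ℝ³, and assume each ψ_τ is a C¹ diffeomorphism of ℝ³ with ‖Dψ_τ‖_{L^∞} ≤ A for all τ ∈ [0,t] and ‖D(ψ_t^{-1})‖_{L^∞} ≤ A, for some A ≥ 1. For x, y ∈ ℝ³ set m_x(y) = ψ_t^{-1}(x) − ψ_t^{-1}(x+y). Then for all x, y ∈ ℝ³: |m_x(−y) − y| ≤ A² V |y| and |m_x(y) + y| ≤ A² V |y|. -/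

import Mathlib

open MeasureTheory
open scoped Real

noncomputable section

private lemma lip_of_fderiv_le {f : EuclideanSpace ℝ (Fin 3) → EuclideanSpace ℝ (Fin 3)}
    (hf : Differentiable ℝ f) {K : ℝ} (hK : ∀ x, ‖fderiv ℝ f x‖ ≤ K)
    (a b : EuclideanSpace ℝ (Fin 3)) : ‖f a - f b‖ ≤ K * ‖a - b‖ :=
  (convex_univ (𝕜 := ℝ)).norm_image_sub_le_of_norm_fderiv_le
    (fun x _ => hf x) (fun x _ => hK x) trivial trivial

private lemma aesm_flow
    (t : ℝ) (ht : 0 < t)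
    (w : ℝ → EuclideanSpace ℝ (Fin 3) → EuclideanSpace ℝ (Fin 3))
    (hw : Continuous (Function.uncurry w))
    (ψ : ℝ → EuclideanSpace ℝ (Fin 3) → EuclideanSpace ℝ (Fin 3))
    (hψ : ∀ τ ∈ Set.Icc (0 : ℝ) t, ∀ x,
      ψ τ x = x + ∫ s in Set.Ioc (0 : ℝ) τ, w s (ψ s x))
    (a : EuclideanSpace ℝ (Fin 3)) :
    AEStronglyMeasurable (fun s => w s (ψ s a)) (volume.restrict (Set.Ioc (0:ℝ) t)) := by
  have hv : AEStronglyMeasurable (fun s => ψ s a) (volume.restrict (Set.Ioc (0:ℝ) t)) := by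
    set g : ℝ → EuclideanSpace ℝ (Fin 3) := fun s => w s (ψ s a) with hgdef
    set S : Set ℝ := {τ | τ ∈ Set.Icc (0:ℝ) t ∧ IntegrableOn g (Set.Ioc 0 τ)} with hSdef
    have hS0 : (0:ℝ) ∈ S := ⟨⟨le_refl _, ht.le⟩, by simp⟩
    have hSbdd : BddAbove S := ⟨t, fun τ hτ => hτ.1.2⟩
    set T := sSup S with hTdef
    have hT0 : 0 ≤ T := le_csSup hSbdd hS0
    have hTt : T ≤ t := csSup_le ⟨0, hS0⟩ (fun τ hτ => hτ.1.2)
    have hgt : ∀ s, T < s → s ≤ t → ψ s a = a := by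
      intro s hTs hst
      have hns : ¬ IntegrableOn g (Set.Ioc 0 s) := by
        intro h
        exact absurd (le_csSup hSbdd ⟨⟨hT0.trans hTs.le, hst⟩, h⟩) (not_le.mpr hTs)
      rw [hψ s ⟨hT0.trans hTs.le, hst⟩ a, integral_undef hns, add_zero]
    have hcont : ContinuousOn (fun s => ψ s a) (Set.Ioo 0 T) := by
      intro s hs
      obtain ⟨τ, hτS, hsτ⟩ := exists_lt_of_lt_csSup ⟨0, hS0⟩ hs.2
      have hint : IntegrableOn g (Set.Icc 0 τ) := by
        rw [integrableOn_Icc_iff_integrableOn_Ioc]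
        exact hτS.2
      have hFA : ContinuousAt (fun x => a + ∫ u in Set.Ioc (0:ℝ) x, g u) s := by
        have h1 := (intervalIntegral.continuousOn_primitive (f := g) (μ := volume) hint).mono
          (Set.Ioo_subset_Icc_self)
        have h2 := h1.continuousAt (isOpen_Ioo.mem_nhds (⟨hs.1, hsτ⟩ : s ∈ Set.Ioo (0:ℝ) τ))
        exact continuousAt_const.add h2
      have hev : (fun x => ψ x a) =ᶠ[nhds s] (fun x => a + ∫ u in Set.Ioc (0:ℝ) x, g u) := by
        filter_upwards [isOpen_Ioo.mem_nhds (⟨hs.1, hsτ⟩ : s ∈ Set.Ioo (0:ℝ) τ)] with u hu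
        exact hψ u ⟨hu.1.le, hu.2.le.trans hτS.1.2⟩ a
      exact (hFA.congr hev.symm).continuousWithinAt
    have hsplit : Set.Ioc (0:ℝ) t = Set.Ioc 0 T ∪ Set.Ioc T t :=
      (Set.Ioc_union_Ioc_eq_Ioc hT0 hTt).symm
    rw [hsplit]
    refine AEStronglyMeasurable.mono_measure ?_ (Measure.restrict_union_le _ _)
    rw [aestronglyMeasurable_add_measure_iff]
    constructor
    · have h1 : volume.restrict (Set.Ioc (0:ℝ) T) = volume.restrict (Set.Ioo 0 T) :=
        restrict_Ioo_eq_restrict_Ioc.symm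
      rw [h1]
      exact hcont.aestronglyMeasurable measurableSet_Ioo
    · refine (aestronglyMeasurable_const (b := a)).congr ?_
      rw [Filter.EventuallyEq, ae_restrict_iff' measurableSet_Ioc]
      exact Filter.Eventually.of_forall (fun s hs => (hgt s hs.1 hs.2).symm)
  have : Continuous (Function.uncurry w) := hw
  exact this.comp_aestronglyMeasurable (aestronglyMeasurable_id.prodMk hv)

private lemma key_estimate
    (t : ℝ) (ht : 0 < t)
    (w : ℝ → EuclideanSpace ℝ (Fin 3) → EuclideanSpace ℝ (Fin 3))
    (hw : Continuous (Function.uncurry w))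
    (hwdiff : ∀ τ ∈ Set.Icc (0 : ℝ) t, Differentiable ℝ (w τ))
    (W : ℝ → ℝ) (hW : IntegrableOn W (Set.Ioc (0 : ℝ) t))
    (hWb : ∀ τ ∈ Set.Icc (0 : ℝ) t, ∀ x, ‖fderiv ℝ (w τ) x‖ ≤ W τ)
    (ψ : ℝ → EuclideanSpace ℝ (Fin 3) → EuclideanSpace ℝ (Fin 3))
    (hψ : ∀ τ ∈ Set.Icc (0 : ℝ) t, ∀ x,
      ψ τ x = x + ∫ s in Set.Ioc (0 : ℝ) τ, w s (ψ s x))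
    (hψdiffeo : ∀ τ ∈ Set.Icc (0 : ℝ) t, ContDiff ℝ 1 (ψ τ) ∧ Function.Bijective (ψ τ))
    (A : ℝ) (hA : 1 ≤ A)
    (hDψ : ∀ τ ∈ Set.Icc (0 : ℝ) t, ∀ x, ‖fderiv ℝ (ψ τ) x‖ ≤ A)
    (a b : EuclideanSpace ℝ (Fin 3)) :
    ‖(ψ t a - ψ t b) - (a - b)‖ ≤ A * (∫ τ in Set.Ioc (0:ℝ) t, W τ) * ‖a - b‖ := by
  have hma := aesm_flow t ht w hw ψ hψ a
  have hmb := aesm_flow t ht w hw ψ hψ b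
  set ga : ℝ → EuclideanSpace ℝ (Fin 3) := fun s => w s (ψ s a) with hga_def
  set gb : ℝ → EuclideanSpace ℝ (Fin 3) := fun s => w s (ψ s b) with hgb_def
  have hWnn : ∀ s ∈ Set.Ioc (0:ℝ) t, 0 ≤ W s := fun s hs =>
    (norm_nonneg _).trans (hWb s ⟨hs.1.le, hs.2⟩ 0)
  have hbound : ∀ s ∈ Set.Ioc (0:ℝ) t, ‖ga s - gb s‖ ≤ A * ‖a - b‖ * W s := by
    intro s hs
    have hsI : s ∈ Set.Icc (0:ℝ) t := ⟨hs.1.le, hs.2⟩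
    have h1 : ‖ga s - gb s‖ ≤ W s * ‖ψ s a - ψ s b‖ :=
      lip_of_fderiv_le (hwdiff s hsI) (hWb s hsI) _ _
    have h2 : ‖ψ s a - ψ s b‖ ≤ A * ‖a - b‖ :=
      lip_of_fderiv_le ((hψdiffeo s hsI).1.differentiable one_ne_zero) (hDψ s hsI) _ _
    calc ‖ga s - gb s‖ ≤ W s * (A * ‖a - b‖) :=
          h1.trans (mul_le_mul_of_nonneg_left h2 (hWnn s hs))
      _ = A * ‖a - b‖ * W s := by ring
  have hWint : Integrable (fun s => A * ‖a - b‖ * W s)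
      (volume.restrict (Set.Ioc (0:ℝ) t)) := hW.const_mul _
  have hInth : IntegrableOn (fun s => ga s - gb s) (Set.Ioc (0:ℝ) t) := by
    refine hWint.mono' (hma.sub hmb) ?_
    rw [ae_restrict_iff' measurableSet_Ioc]
    exact Filter.Eventually.of_forall hbound
  have htI : t ∈ Set.Icc (0:ℝ) t := ⟨ht.le, le_rfl⟩
  have hid : ψ t a - ψ t b - (a - b) =
      (∫ s in Set.Ioc (0:ℝ) t, ga s) - ∫ s in Set.Ioc (0:ℝ) t, gb s := by
    rw [hψ t htI a, hψ t htI b]; abel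
  rw [hid]
  by_cases hia : IntegrableOn ga (Set.Ioc (0:ℝ) t)
  · have hib : IntegrableOn gb (Set.Ioc (0:ℝ) t) := by
      refine (hia.sub hInth).congr ?_
      exact Filter.Eventually.of_forall (fun s => by simp)
    rw [← integral_sub hia hib]
    have hn : ‖∫ s in Set.Ioc (0:ℝ) t, (ga s - gb s)‖ ≤
        ∫ s in Set.Ioc (0:ℝ) t, A * ‖a - b‖ * W s := by
      refine norm_integral_le_of_norm_le hWint ?_
      rw [ae_restrict_iff' measurableSet_Ioc]
      exact Filter.Eventually.of_forall hbound
    calc ‖∫ s in Set.Ioc (0:ℝ) t, (ga s - gb s)‖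
        ≤ ∫ s in Set.Ioc (0:ℝ) t, A * ‖a - b‖ * W s := hn
      _ = A * ‖a - b‖ * ∫ s in Set.Ioc (0:ℝ) t, W s := by
          rw [integral_const_mul]
      _ = A * (∫ τ in Set.Ioc (0:ℝ) t, W τ) * ‖a - b‖ := by ring
  · have hib : ¬ IntegrableOn gb (Set.Ioc (0:ℝ) t) := by
      intro hib
      refine hia ((hib.add hInth).congr ?_)
      exact Filter.Eventually.of_forall (fun s => by simp)
    rw [integral_undef hia, integral_undef hib, sub_zero, norm_zero]
    have hVnn : 0 ≤ ∫ τ in Set.Ioc (0:ℝ) t, W τ :=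
      setIntegral_nonneg measurableSet_Ioc hWnn
    have hA0 : (0:ℝ) ≤ A := zero_le_one.trans hA
    positivity

/-- Estimate on the Lagrangian displacement `m_x(y) = ψ_t^{-1}(x) − ψ_t^{-1}(x+y)` of the flow
`ψ` of a time-dependent vector field `w`: `|m_x(−y) − y| ≤ A² V |y|` and
`|m_x(y) + y| ≤ A² V |y|`, where `V = ∫₀ᵗ ‖D_x w(τ)‖_{L^∞} dτ`. -/
theorem lagrangian_displacement_estimate
    (t : ℝ) (ht : 0 < t)
    (w : ℝ → EuclideanSpace ℝ (Fin 3) → EuclideanSpace ℝ (Fin 3))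
    (hw : Continuous (Function.uncurry w))
    (hwdiff : ∀ τ ∈ Set.Icc (0 : ℝ) t, Differentiable ℝ (w τ))
    -- `W` is a bound for `‖D_x w(τ,·)‖_{L^∞}`, integrable on `[0,t]`, so that
    -- `V = ∫₀ᵗ W(τ) dτ ≥ ∫₀ᵗ ‖D_x w(τ,·)‖_{L^∞} dτ` is finite.
    (W : ℝ → ℝ) (hW : IntegrableOn W (Set.Ioc (0 : ℝ) t))
    (hWb : ∀ τ ∈ Set.Icc (0 : ℝ) t, ∀ x, ‖fderiv ℝ (w τ) x‖ ≤ W τ)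
    (ψ : ℝ → EuclideanSpace ℝ (Fin 3) → EuclideanSpace ℝ (Fin 3))
    (hψ : ∀ τ ∈ Set.Icc (0 : ℝ) t, ∀ x,
      ψ τ x = x + ∫ s in Set.Ioc (0 : ℝ) τ, w s (ψ s x))
    (hψdiffeo : ∀ τ ∈ Set.Icc (0 : ℝ) t, ContDiff ℝ 1 (ψ τ) ∧ Function.Bijective (ψ τ))
    (φ : EuclideanSpace ℝ (Fin 3) → EuclideanSpace ℝ (Fin 3))
    (hφl : Function.LeftInverse φ (ψ t)) (hφr : Function.RightInverse φ (ψ t))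
    (hφdiff : ContDiff ℝ 1 φ)
    (A : ℝ) (hA : 1 ≤ A)
    (hDψ : ∀ τ ∈ Set.Icc (0 : ℝ) t, ∀ x, ‖fderiv ℝ (ψ τ) x‖ ≤ A)
    (hDφ : ∀ x, ‖fderiv ℝ φ x‖ ≤ A) :
    ∀ x y : EuclideanSpace ℝ (Fin 3),
      ‖(φ x - φ (x - y)) - y‖ ≤ A ^ 2 * (∫ τ in Set.Ioc (0 : ℝ) t, W τ) * ‖y‖ ∧
      ‖(φ x - φ (x + y)) + y‖ ≤ A ^ 2 * (∫ τ in Set.Ioc (0 : ℝ) t, W τ) * ‖y‖ := by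
  intro x y
  have hφlip : ∀ u v : EuclideanSpace ℝ (Fin 3), ‖φ u - φ v‖ ≤ A * ‖u - v‖ := fun u v =>
    lip_of_fderiv_le (hφdiff.differentiable one_ne_zero) hDφ u v
  have key := key_estimate t ht w hw hwdiff W hW hWb ψ hψ hψdiffeo A hA hDψ
  have hVnn : 0 ≤ ∫ τ in Set.Ioc (0:ℝ) t, W τ :=
    setIntegral_nonneg measurableSet_Ioc
      (fun s hs => (norm_nonneg _).trans (hWb s ⟨hs.1.le, hs.2⟩ 0))
  have hA0 : (0:ℝ) ≤ A := zero_le_one.trans hA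
  constructor
  · have h1 := key (φ x) (φ (x - y))
    rw [hφr x, hφr (x - y)] at h1
    have h2 : ‖(φ x - φ (x - y)) - y‖ = ‖x - (x - y) - (φ x - φ (x - y))‖ := by
      rw [← norm_neg]
      congr 1
      abel
    have h3 : ‖φ x - φ (x - y)‖ ≤ A * ‖y‖ := by
      have := hφlip x (x - y)
      simpa [show x - (x - y) = y by abel] using this
    calc ‖(φ x - φ (x - y)) - y‖ = ‖x - (x - y) - (φ x - φ (x - y))‖ := h2
      _ ≤ A * (∫ τ in Set.Ioc (0:ℝ) t, W τ) * ‖φ x - φ (x - y)‖ := h1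
      _ ≤ A * (∫ τ in Set.Ioc (0:ℝ) t, W τ) * (A * ‖y‖) :=
          mul_le_mul_of_nonneg_left h3 (mul_nonneg hA0 hVnn)
      _ = A ^ 2 * (∫ τ in Set.Ioc (0:ℝ) t, W τ) * ‖y‖ := by ring
  · have h1 := key (φ x) (φ (x + y))
    rw [hφr x, hφr (x + y)] at h1
    have h2 : ‖(φ x - φ (x + y)) + y‖ = ‖x - (x + y) - (φ x - φ (x + y))‖ := by
      rw [← norm_neg]
      congr 1
      abel
    have h3 : ‖φ x - φ (x + y)‖ ≤ A * ‖y‖ := by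
      have := hφlip x (x + y)
      simpa [show x - (x + y) = -y by abel] using this
    calc ‖(φ x - φ (x + y)) + y‖ = ‖x - (x + y) - (φ x - φ (x + y))‖ := h2
      _ ≤ A * (∫ τ in Set.Ioc (0:ℝ) t, W τ) * ‖φ x - φ (x + y)‖ := h1
      _ ≤ A * (∫ τ in Set.Ioc (0:ℝ) t, W τ) * (A * ‖y‖) :=
          mul_le_mul_of_nonneg_left h3 (mul_nonneg hA0 hVnn)
      _ = A ^ 2 * (∫ τ in Set.Ioc (0:ℝ) t, W τ) * ‖y‖ := by ring
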